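/- Let L be a linearly compact Lie superalgebra with a filtration L = S_{−d} ⊃ ⋯ ⊃ S₀ ⊃ S₁ ⊃ ⋯ by open subalgebras such that the associated graded Gr L = ⊕_{j≥−d} 𝔤_j is transitive. If σ is a continuous automorphism of L preserving the filtration and inducing the identity on Gr L, then log σ = Σ_{n≥1} (−1)^{n+1} σ₁ⁿ/n converges (where σ = 1 + σ₁ with σ₁(S_j) ⊆ S_{j+1}), and t ↦ exp(t·log σ) is a one-parameter group of automorphisms; in particular σ lies in the image of the exponential of the first filtration member of the derivation algebra. -/

import Mathlib

set_option linter.unusedSectionVars false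
set_option maxHeartbeats 1000000

open PowerSeries Finset

namespace Stmt10



lemma sum_range_antidiagonal {M : Type*} [AddCommMonoid M] (N : ℕ) (T : ℕ × ℕ → M) :
    ∑ m ∈ Finset.range (N + 1), ∑ pq ∈ Finset.HasAntidiagonal.antidiagonal m, T pq
      = ∑ pq ∈ (Finset.range (N + 1) ×ˢ Finset.range (N + 1)).filter
          (fun pq => pq.1 + pq.2 ≤ N), T pq := by
  rw [← Finset.sum_biUnion]
  · congr 1
    apply Finset.ext
    intro pq
    simp only [Finset.mem_biUnion, Finset.mem_range, Finset.HasAntidiagonal.mem_antidiagonal,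
      Finset.mem_filter, Finset.mem_product]
    constructor
    · rintro ⟨m, hm, h⟩; omega
    · rintro ⟨⟨h1, h2⟩, h3⟩; exact ⟨pq.1 + pq.2, by omega, rfl⟩
  · intro a _ b _ hab
    simp only [Finset.disjoint_left, Finset.HasAntidiagonal.mem_antidiagonal]
    intro pq h1 h2
    exact hab (h1.symm.trans h2)


structure LimCtx (F : Type*) (L : Type*) [Field F] [AddCommGroup L] [Module F L] where
  P : ℕ → Submodule F L
  η : Module.End F L
  hP0 : P 0 = ⊤
  hPanti : ∀ j, P (j + 1) ≤ P j
  hsep : ⨅ j, P j = ⊥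
  hcompl : ∀ f : ℕ → L, (∀ m, f (m + 1) - f m ∈ P m) → ∃ x : L, ∀ m, x - f m ∈ P m
  hη : ∀ j, ∀ x ∈ P j, η x ∈ P (j + 1)

namespace LimCtx

variable {F L : Type*} [Field F] [AddCommGroup L] [Module F L] (C : LimCtx F L)

lemma mem_top (x : L) : x ∈ C.P 0 := by rw [C.hP0]; trivial

lemma hPle : ∀ {i j : ℕ}, i ≤ j → C.P j ≤ C.P i := by
  intro i j h
  induction j with
  | zero => simp_all
  | succ n ih =>
    rcases Nat.lt_succ_iff_lt_or_eq.mp (Nat.lt_succ_of_le h) with h' | h'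
    · exact le_trans (C.hPanti n) (ih (Nat.lt_succ_iff.mp h'))
    · subst h'; exact le_rfl

lemma hηpow {j : ℕ} {x : L} (hx : x ∈ C.P j) (m : ℕ) : (C.η ^ m) x ∈ C.P (j + m) := by
  induction m with
  | zero => simpa using hx
  | succ n ih =>
    have : (C.η ^ (n + 1)) x = C.η ((C.η ^ n) x) := by
      rw [pow_succ']; exact Module.End.mul_apply _ _ _
    rw [this, show j + (n + 1) = (j + n) + 1 by omega]
    exact C.hη _ _ ih

/-- Partial sums of the series `f(η) x`. -/
noncomputable def S (f : PowerSeries F) (N : ℕ) (x : L) : L :=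
  ∑ m ∈ Finset.range (N + 1), (PowerSeries.coeff m f) • (C.η ^ m) x

lemma S_succ (f : PowerSeries F) (N : ℕ) (x : L) :
    C.S f (N + 1) x = C.S f N x + (PowerSeries.coeff (N + 1) f) • (C.η ^ (N + 1)) x :=
  Finset.sum_range_succ _ _

lemma S_mem (f : PowerSeries F) (N : ℕ) {j : ℕ} {x : L} (hx : x ∈ C.P j) :
    C.S f N x ∈ C.P j := by
  refine Submodule.sum_mem _ fun m _ => Submodule.smul_mem _ _ ?_
  exact C.hPle (Nat.le_add_right _ _) (C.hηpow hx m)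

lemma S_cauchy (f : PowerSeries F) (x : L) (m : ℕ) :
    C.S f (m + 1) x - C.S f m x ∈ C.P m := by
  rw [C.S_succ]
  have : (C.η ^ (m + 1)) x ∈ C.P (m + 1) := by
    simpa using C.hηpow (C.mem_top x) (m + 1)
  simpa using C.hPanti m (Submodule.smul_mem _ _ this)

/-- The limit of the series `∑ coeff m f • η^m x`. -/
noncomputable def lim (f : PowerSeries F) (x : L) : L :=
  Classical.choose (C.hcompl (fun m => C.S f m x) (C.S_cauchy f x))

lemma lim_sub_mem (f : PowerSeries F) (x : L) (N : ℕ) :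
    C.lim f x - C.S f N x ∈ C.P N :=
  Classical.choose_spec (C.hcompl (fun m => C.S f m x) (C.S_cauchy f x)) N

lemma S_sub_S (f : PowerSeries F) {N M : ℕ} (h : N ≤ M) (x : L) :
    C.S f M x - C.S f N x
      = ∑ m ∈ Finset.Ico (N + 1) (M + 1), (PowerSeries.coeff m f) • (C.η ^ m) x := by
  have h2 : N + 1 ≤ M + 1 := Nat.succ_le_succ h
  have := Finset.sum_Ico_consecutive (fun m => (PowerSeries.coeff m f) • (C.η ^ m) x)
    (Nat.zero_le (N + 1)) h2
  rw [S, S, Finset.range_eq_Ico, Finset.range_eq_Ico, ← this]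
  abel

lemma S_tail_mem (f : PowerSeries F) {N M : ℕ} (h : N ≤ M) {j : ℕ} {x : L}
    (hx : x ∈ C.P j) : C.S f M x - C.S f N x ∈ C.P (j + N + 1) := by
  rw [C.S_sub_S f h]
  refine Submodule.sum_mem _ fun m hm => Submodule.smul_mem _ _ ?_
  have hm' : N + 1 ≤ m := (Finset.mem_Ico.mp hm).1
  exact C.hPle (by omega) (C.hηpow hx m)

lemma lim_spec (f : PowerSeries F) {j : ℕ} {x : L} (hx : x ∈ C.P j) (N : ℕ) :
    C.lim f x - C.S f N x ∈ C.P (j + N + 1) := by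
  have h1 := C.lim_sub_mem f x (j + N + 1)
  have h2 := C.S_tail_mem f (show N ≤ j + N + 1 by omega) hx
  have := Submodule.add_mem _ h1 h2
  simpa using this

lemma lim_spec0 (f : PowerSeries F) (x : L) (N : ℕ) :
    C.lim f x - C.S f N x ∈ C.P (N + 1) := by
  simpa using C.lim_spec f (C.mem_top x) N

lemma uniq {f : PowerSeries F} {x y : L}
    (h : ∀ N, y - C.S f N x ∈ C.P (N + 1)) : y = C.lim f x := by
  have key : ∀ n, y - C.lim f x ∈ C.P n := by
    intro n
    have h1 := C.lim_sub_mem f x n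
    have h2 := C.hPanti n (h n)
    have := Submodule.sub_mem _ h2 h1
    simpa using this
  have : y - C.lim f x ∈ ⨅ j, C.P j := Submodule.mem_iInf _ |>.mpr key
  rw [C.hsep] at this
  exact sub_eq_zero.mp ((Submodule.mem_bot F).mp this)

lemma S_add (f : PowerSeries F) (N : ℕ) (x y : L) :
    C.S f N (x + y) = C.S f N x + C.S f N y := by
  simp [S, smul_add, Finset.sum_add_distrib]

lemma S_smul (f : PowerSeries F) (N : ℕ) (c : F) (x : L) :
    C.S f N (c • x) = c • C.S f N x := by
  simp [S, Finset.smul_sum, smul_comm c]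

lemma S_sub (f : PowerSeries F) (N : ℕ) (x y : L) :
    C.S f N (x - y) = C.S f N x - C.S f N y := by
  simp [S, smul_sub, Finset.sum_sub_distrib]

lemma lim_add (f : PowerSeries F) (x y : L) :
    C.lim f (x + y) = C.lim f x + C.lim f y := by
  refine (C.uniq fun N => ?_).symm
  rw [C.S_add]
  have := Submodule.add_mem _ (C.lim_spec0 f x N) (C.lim_spec0 f y N)
  have h2 : C.lim f x + C.lim f y - (C.S f N x + C.S f N y)
      = (C.lim f x - C.S f N x) + (C.lim f y - C.S f N y) := by abel
  rw [h2]; exact this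

lemma lim_smul (f : PowerSeries F) (c : F) (x : L) :
    C.lim f (c • x) = c • C.lim f x := by
  refine (C.uniq fun N => ?_).symm
  rw [C.S_smul]
  have := Submodule.smul_mem _ c (C.lim_spec0 f x N)
  simpa [smul_sub] using this

/-- `lim f` as a linear endomorphism. -/
noncomputable def limEnd (f : PowerSeries F) : Module.End F L where
  toFun := C.lim f
  map_add' := C.lim_add f
  map_smul' := C.lim_smul f

@[simp] lemma limEnd_apply (f : PowerSeries F) (x : L) : C.limEnd f x = C.lim f x := rfl

lemma S_fadd (f g : PowerSeries F) (N : ℕ) (x : L) :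
    C.S (f + g) N x = C.S f N x + C.S g N x := by
  simp [S, add_smul, Finset.sum_add_distrib]

lemma S_fsmul (a : F) (f : PowerSeries F) (N : ℕ) (x : L) :
    C.S (a • f) N x = a • C.S f N x := by
  simp [S, Finset.smul_sum, mul_smul]

lemma lim_fadd (f g : PowerSeries F) (x : L) :
    C.lim (f + g) x = C.lim f x + C.lim g x := by
  refine (C.uniq fun N => ?_).symm
  rw [C.S_fadd]
  have := Submodule.add_mem _ (C.lim_spec0 f x N) (C.lim_spec0 g x N)
  have h2 : C.lim f x + C.lim g x - (C.S f N x + C.S g N x)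
      = (C.lim f x - C.S f N x) + (C.lim g x - C.S g N x) := by abel
  rw [h2]; exact this

lemma lim_fsmul (a : F) (f : PowerSeries F) (x : L) :
    C.lim (a • f) x = a • C.lim f x := by
  refine (C.uniq fun N => ?_).symm
  rw [C.S_fsmul]
  have := Submodule.smul_mem _ a (C.lim_spec0 f x N)
  simpa [smul_sub] using this

lemma lim_fzero (x : L) : C.lim (0 : PowerSeries F) x = 0 := by
  refine (C.uniq fun N => ?_).symm
  simp [S]

lemma lim_fsum {ι : Type*} (s : Finset ι) (f : ι → PowerSeries F) (x : L) :
    C.lim (∑ i ∈ s, f i) x = ∑ i ∈ s, C.lim (f i) x := by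
  induction s using Finset.cons_induction with
  | empty => simpa using C.lim_fzero x
  | cons a s ha ih =>
    rw [Finset.sum_cons, Finset.sum_cons, C.lim_fadd, ih]

lemma lim_one (x : L) : C.lim (1 : PowerSeries F) x = x := by
  refine (C.uniq fun N => ?_).symm
  have : C.S (1 : PowerSeries F) N x = x := by
    rw [S]
    rw [Finset.sum_eq_single 0]
    · simp
    · intro m _ hm
      simp [PowerSeries.coeff_one, hm]
    · intro h; exact absurd (Finset.mem_range.mpr (Nat.succ_pos N)) h
  simp [this]

lemma lim_lowvanish {f : PowerSeries F} {N : ℕ}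
    (hf : ∀ k ≤ N, PowerSeries.coeff k f = 0) {j : ℕ} {x : L} (hx : x ∈ C.P j) :
    C.lim f x ∈ C.P (j + N + 1) := by
  have hS : C.S f N x = 0 := by
    rw [S]
    refine Finset.sum_eq_zero fun m hm => ?_
    rw [hf m (Nat.lt_succ_iff.mp (Finset.mem_range.mp hm)), zero_smul]
  have := C.lim_spec f hx N
  rwa [hS, sub_zero] at this

lemma lim_mul (f g : PowerSeries F) (x : L) :
    C.lim (f * g) x = C.lim f (C.lim g x) := by
  refine (C.uniq fun N => ?_).symm
  set A := C.lim g x with hA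
  have h1 : C.lim f A - C.S f N A ∈ C.P (N + 1) := C.lim_spec0 f A N
  have h2 : C.S f N A - C.S f N (C.S g N x) ∈ C.P (N + 1) := by
    rw [← C.S_sub]
    exact C.S_mem f N (C.lim_spec0 g x N)
  have h3 : C.S f N (C.S g N x) - C.S (f * g) N x ∈ C.P (N + 1) := by
    have e1 : C.S f N (C.S g N x)
        = ∑ pq ∈ Finset.range (N + 1) ×ˢ Finset.range (N + 1),
            (PowerSeries.coeff pq.1 f * PowerSeries.coeff pq.2 g)
              • (C.η ^ (pq.1 + pq.2)) x := by
      rw [Finset.sum_product]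
      dsimp only
      rw [S]
      refine Finset.sum_congr rfl fun p _ => ?_
      rw [S, map_sum, Finset.smul_sum]
      refine Finset.sum_congr rfl fun q _ => ?_
      rw [map_smul, pow_add, Module.End.mul_apply, smul_smul]
    have e2 : C.S (f * g) N x
        = ∑ pq ∈ (Finset.range (N + 1) ×ˢ Finset.range (N + 1)).filter
            (fun pq => pq.1 + pq.2 ≤ N),
            (PowerSeries.coeff pq.1 f * PowerSeries.coeff pq.2 g)
              • (C.η ^ (pq.1 + pq.2)) x := by
      rw [← sum_range_antidiagonal]
      rw [S]
      refine Finset.sum_congr rfl fun m _ => ?_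
      rw [PowerSeries.coeff_mul, Finset.sum_smul]
      refine Finset.sum_congr rfl fun pq hpq => ?_
      rw [Finset.HasAntidiagonal.mem_antidiagonal.mp hpq]
    rw [e1, e2]
    have split := Finset.sum_filter_add_sum_filter_not
      (Finset.range (N + 1) ×ˢ Finset.range (N + 1)) (fun pq => pq.1 + pq.2 ≤ N)
      (fun pq => (PowerSeries.coeff pq.1 f * PowerSeries.coeff pq.2 g)
              • (C.η ^ (pq.1 + pq.2)) x)
    rw [← split, add_sub_cancel_left]
    refine Submodule.sum_mem _ fun pq hpq => Submodule.smul_mem _ _ ?_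
    have hgt : N + 1 ≤ pq.1 + pq.2 := by
      simp only [Finset.mem_filter] at hpq
      omega
    have := C.hηpow (C.mem_top x) (pq.1 + pq.2)
    exact C.hPle (by omega) this
  have key := Submodule.add_mem _ (Submodule.add_mem _ h1 h2) h3
  have e : C.lim f A - C.S f N A + (C.S f N A - C.S f N (C.S g N x))
      + (C.S f N (C.S g N x) - C.S (f * g) N x) = C.lim f A - C.S (f * g) N x := by
    abel
  rwa [e] at key

/-- Shift of a power series: drops the first `k` coefficients. -/
noncomputable def shiftPS (F : Type*) [Field F] (k : ℕ) (f : PowerSeries F) : PowerSeries F :=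
  PowerSeries.mk fun n => PowerSeries.coeff (n + k) f

lemma coeff_shiftPS {k n : ℕ} (f : PowerSeries F) :
    PowerSeries.coeff n (shiftPS F k f) = PowerSeries.coeff (n + k) f :=
  PowerSeries.coeff_mk _ _

/-- Exact tail factorization: the tail of the series is exactly `η^(N+1)` applied to
the limit of the shifted series. -/
lemma lim_tail (f : PowerSeries F) (N : ℕ) (x : L) :
    C.lim f x = C.S f N x + (C.η ^ (N + 1)) (C.lim (shiftPS F (N + 1) f) x) := by
  set r := (C.η ^ (N + 1)) (C.lim (shiftPS F (N + 1) f) x) with hr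
  have key : ∀ M : ℕ, C.lim f x - C.S f N x - r ∈ C.P M := by
    intro M
    have h1 : r - (C.η ^ (N + 1)) (C.S (shiftPS F (N + 1) f) M x) ∈ C.P M := by
      rw [hr, ← map_sub]
      have hmem := C.lim_spec0 (shiftPS F (N + 1) f) x M
      have := C.hηpow hmem (N + 1)
      exact C.hPle (by omega) this
    have h2 : (C.η ^ (N + 1)) (C.S (shiftPS F (N + 1) f) M x)
        = C.S f (M + N + 1) x - C.S f N x := by
      rw [C.S_sub_S f (show N ≤ M + N + 1 by omega)]
      rw [S, map_sum]
      rw [Finset.sum_Ico_eq_sum_range]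
      have hidx : M + N + 1 + 1 - (N + 1) = M + 1 := by omega
      rw [hidx]
      refine Finset.sum_congr rfl fun m _ => ?_
      rw [map_smul, coeff_shiftPS]
      have h4 : (C.η ^ (N + 1 + m)) x = (C.η ^ (N + 1)) ((C.η ^ m) x) := by
        rw [pow_add]
        exact Module.End.mul_apply _ _ _
      have h5 : m + (N + 1) = N + 1 + m := by omega
      rw [h5, h4]
    have h3 : C.lim f x - C.S f (M + N + 1) x ∈ C.P M :=
      C.hPle (by omega) (C.lim_sub_mem f x (M + N + 1))
    have h6 : C.S f (M + N + 1) x - C.S f N x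
        - (C.η ^ (N + 1)) (C.S (shiftPS F (N + 1) f) M x) = 0 := by
      rw [h2]
      abel
    have e : C.lim f x - C.S f N x - r
        = (C.lim f x - C.S f (M + N + 1) x)
          - (r - (C.η ^ (N + 1)) (C.S (shiftPS F (N + 1) f) M x))
          + (C.S f (M + N + 1) x - C.S f N x
            - (C.η ^ (N + 1)) (C.S (shiftPS F (N + 1) f) M x)) := by
      abel
    rw [e, h6, add_zero]
    exact Submodule.sub_mem _ h3 h1
  have : C.lim f x - C.S f N x - r ∈ ⨅ j, C.P j := Submodule.mem_iInf _ |>.mpr key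
  rw [C.hsep] at this
  have h0 : C.lim f x - C.S f N x - r = 0 := (Submodule.mem_bot F).mp this
  have h1 : C.lim f x - C.S f N x = r := sub_eq_zero.mp h0
  rw [← h1]
  abel


end LimCtx

section PS

variable (F : Type*) [Field F] [CharZero F]

/-- The power series of `log (1 + X)`. -/
noncomputable def lp : PowerSeries F :=
  PowerSeries.mk fun m => (-1 : F) ^ (m + 1) * (m : F)⁻¹

variable {F}

lemma coeff_lp (m : ℕ) :
    PowerSeries.coeff m (lp F) = (-1 : F) ^ (m + 1) * (m : F)⁻¹ :=
  PowerSeries.coeff_mk _ _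

lemma coeff_lp_zero : PowerSeries.coeff 0 (lp F) = 0 := by
  rw [coeff_lp]; simp

lemma const_lp : PowerSeries.constantCoeff (lp F) = 0 := by
  rw [← PowerSeries.coeff_zero_eq_constantCoeff, coeff_lp_zero]

lemma coeff_pow_vanish {f : PowerSeries F} (hf : PowerSeries.constantCoeff f = 0) :
    ∀ m n : ℕ, n < m → PowerSeries.coeff n (f ^ m) = 0 := by
  intro m
  induction m with
  | zero => intro n h; omega
  | succ m ih =>
    intro n h
    rw [pow_succ', PowerSeries.coeff_mul]
    refine Finset.sum_eq_zero fun pq hpq => ?_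
    have hsum := Finset.HasAntidiagonal.mem_antidiagonal.mp hpq
    rcases Nat.eq_zero_or_pos pq.1 with h0 | h0
    · have e : PowerSeries.coeff pq.1 f = 0 := by
        rw [h0, PowerSeries.coeff_zero_eq_constantCoeff, hf]
      rw [e, zero_mul]
    · have : pq.2 < m := by omega
      rw [ih _ this, mul_zero]

lemma coeff_lp_pow_vanish {m n : ℕ} (h : n < m) :
    PowerSeries.coeff n (lp F ^ m) = 0 :=
  coeff_pow_vanish const_lp m n h

/-- The power series of `exp (t • log (1+X))`. -/
noncomputable def exs (t : F) : PowerSeries F :=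
  PowerSeries.mk fun n => ∑ m ∈ Finset.range (n + 1),
    (t ^ m * ((Nat.factorial m : F))⁻¹) * PowerSeries.coeff n (lp F ^ m)

lemma coeff_exs (t : F) (n : ℕ) :
    PowerSeries.coeff n (exs t) = ∑ m ∈ Finset.range (n + 1),
      (t ^ m * ((Nat.factorial m : F))⁻¹) * PowerSeries.coeff n (lp F ^ m) :=
  PowerSeries.coeff_mk _ _

lemma coeff_exs_ext (t : F) {n M : ℕ} (h : n ≤ M) :
    PowerSeries.coeff n (exs t) = ∑ m ∈ Finset.range (M + 1),
      (t ^ m * ((Nat.factorial m : F))⁻¹) * PowerSeries.coeff n (lp F ^ m) := by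
  rw [coeff_exs]
  refine Finset.sum_subset ?_ fun m hm hm' => ?_
  · intro m hm; simp only [Finset.mem_range] at *; omega
  · have : n < m := by simp only [Finset.mem_range] at hm hm'; omega
    rw [coeff_lp_pow_vanish this, mul_zero]

lemma exs_zero : exs (0 : F) = 1 := by
  ext n
  rw [coeff_exs, Finset.sum_eq_single 0]
  · simp
  · intro m _ hm; simp [zero_pow hm]
  · intro h; exact absurd (Finset.mem_range.mpr (Nat.succ_pos n)) h

lemma factorial_cast_ne_zero (m : ℕ) : ((Nat.factorial m : F)) ≠ 0 :=
  Nat.cast_ne_zero.mpr (Nat.factorial_ne_zero m)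

lemma choose_mul_factorial_inv (p q : ℕ) :
    (((p + q).choose p : F)) * ((Nat.factorial (p + q) : F))⁻¹
      = ((Nat.factorial p : F))⁻¹ * ((Nat.factorial q : F))⁻¹ := by
  have h := Nat.add_choose_mul_factorial_mul_factorial p q
  rw [← Nat.choose_symm_add] at h
  have hc : (((p + q).choose p : F)) * (Nat.factorial p : F) * (Nat.factorial q : F)
      = (Nat.factorial (p + q) : F) := by
    exact_mod_cast congrArg (Nat.cast : ℕ → F) h
  have hch : (((p + q).choose p : F)) ≠ 0 := Nat.cast_ne_zero.mpr (Nat.choose_pos (by omega)).ne'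
  rw [← hc, mul_inv, mul_inv, ← mul_assoc, ← mul_assoc, mul_inv_cancel₀ hch, one_mul]

lemma exs_mul (t s : F) : exs t * exs s = exs (t + s) := by
  ext n
  -- common target
  set T : ℕ × ℕ → F := fun pq =>
    (t ^ pq.1 * s ^ pq.2 * (((Nat.factorial pq.1 : F))⁻¹ * ((Nat.factorial pq.2 : F))⁻¹))
      * PowerSeries.coeff n (lp F ^ (pq.1 + pq.2)) with hT
  have hL : PowerSeries.coeff n (exs t * exs s)
      = ∑ p ∈ Finset.range (n + 1), ∑ q ∈ Finset.range (n + 1), T (p, q) := by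
    rw [PowerSeries.coeff_mul]
    have step1 : ∀ ij ∈ Finset.HasAntidiagonal.antidiagonal n,
        PowerSeries.coeff ij.1 (exs t) * PowerSeries.coeff ij.2 (exs s)
        = ∑ p ∈ Finset.range (n + 1), ∑ q ∈ Finset.range (n + 1),
            ((t ^ p * ((Nat.factorial p : F))⁻¹) * PowerSeries.coeff ij.1 (lp F ^ p))
            * ((s ^ q * ((Nat.factorial q : F))⁻¹) * PowerSeries.coeff ij.2 (lp F ^ q)) := by
      intro ij hij
      have hm := Finset.HasAntidiagonal.mem_antidiagonal.mp hij
      rw [coeff_exs_ext t (show ij.1 ≤ n by omega),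
        coeff_exs_ext s (show ij.2 ≤ n by omega), Finset.sum_mul_sum]
    rw [Finset.sum_congr rfl step1]
    rw [Finset.sum_comm]
    refine Finset.sum_congr rfl fun p _ => ?_
    rw [Finset.sum_comm]
    refine Finset.sum_congr rfl fun q _ => ?_
    have factor : ∀ ij ∈ Finset.HasAntidiagonal.antidiagonal n,
        ((t ^ p * ((Nat.factorial p : F))⁻¹) * PowerSeries.coeff ij.1 (lp F ^ p))
        * ((s ^ q * ((Nat.factorial q : F))⁻¹) * PowerSeries.coeff ij.2 (lp F ^ q))
        = (t ^ p * s ^ q * (((Nat.factorial p : F))⁻¹ * ((Nat.factorial q : F))⁻¹))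
            * (PowerSeries.coeff ij.1 (lp F ^ p) * PowerSeries.coeff ij.2 (lp F ^ q)) := by
      intro ij _; ring
    rw [Finset.sum_congr rfl factor, ← Finset.mul_sum, hT]
    dsimp only
    rw [← PowerSeries.coeff_mul, ← pow_add]
  have hR : PowerSeries.coeff n (exs (t + s))
      = ∑ p ∈ Finset.range (n + 1), ∑ q ∈ Finset.range (n + 1), T (p, q) := by
    rw [coeff_exs]
    have step1 : ∀ m ∈ Finset.range (n + 1),
        ((t + s) ^ m * ((Nat.factorial m : F))⁻¹) * PowerSeries.coeff n (lp F ^ m)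
        = ∑ pq ∈ Finset.HasAntidiagonal.antidiagonal m, T pq := by
      intro m _
      rw [add_pow]
      rw [Finset.sum_mul, Finset.sum_mul]
      rw [← Finset.Nat.sum_antidiagonal_eq_sum_range_succ_mk
        (fun pq => (t ^ pq.1 * s ^ pq.2 * ((m.choose pq.1 : F)))
          * ((Nat.factorial m : F))⁻¹ * PowerSeries.coeff n (lp F ^ m))]
      refine Finset.sum_congr rfl fun pq hpq => ?_
      have hm := Finset.HasAntidiagonal.mem_antidiagonal.mp hpq
      subst hm
      rw [hT]
      dsimp only
      rw [← choose_mul_factorial_inv pq.1 pq.2, Nat.choose_symm_add]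
      ring
    rw [Finset.sum_congr rfl step1, sum_range_antidiagonal]
    -- extend filtered sum to the full product (extra terms vanish)
    rw [← Finset.sum_product']
    refine Finset.sum_subset (Finset.filter_subset _ _) fun pq hpq hpq' => ?_
    have : n < pq.1 + pq.2 := by
      simp only [Finset.mem_filter] at hpq'
      rcases Nat.lt_or_ge n (pq.1 + pq.2) with h | h
      · exact h
      · exact absurd ⟨hpq, h⟩ hpq'
    rw [hT]
    dsimp only
    rw [coeff_lp_pow_vanish this, mul_zero]
  rw [hL, hR]

variable (F)

/-- The power series `1/(1+X)` = derivative of `log(1+X)`. -/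
noncomputable def gs : PowerSeries F := PowerSeries.mk fun k => (-1 : F) ^ k

variable {F}

lemma coeff_gs (k : ℕ) : PowerSeries.coeff k (gs F) = (-1 : F) ^ k :=
  PowerSeries.coeff_mk _ _

lemma deriv_lp : d⁄dX F (lp F) = gs F := by
  ext k
  rw [PowerSeries.coeff_derivative, coeff_lp, coeff_gs]
  have hk : ((k : F) + 1) ≠ 0 := Nat.cast_add_one_ne_zero k
  have hc : ((k + 1 : ℕ) : F) = (k : F) + 1 := by push_cast; ring
  rw [hc, mul_assoc, inv_mul_cancel₀ hk, mul_one, pow_succ, pow_succ]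
  ring

lemma one_add_X_mul_gs : ((1 + PowerSeries.X) * gs F : PowerSeries F) = 1 := by
  ext n
  rw [add_mul, one_mul, map_add]
  cases n with
  | zero => simp [coeff_gs, PowerSeries.coeff_zero_X_mul]
  | succ k =>
    rw [PowerSeries.coeff_succ_X_mul, coeff_gs, coeff_gs, PowerSeries.coeff_one]
    rw [pow_succ]
    simp

lemma deriv_lp_pow (m : ℕ) :
    d⁄dX F (lp F ^ (m + 1)) = (m + 1 : ℕ) • (lp F ^ m * gs F) := by
  rw [Derivation.leibniz_pow, Nat.add_sub_cancel, deriv_lp, smul_eq_mul]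

lemma coeff_exs_one_zero : PowerSeries.coeff 0 (exs (1 : F)) = 1 := by
  rw [coeff_exs]
  simp [Nat.factorial]

lemma coeff_d_lp_pow (i k : ℕ) :
    PowerSeries.coeff (k + 1) (lp F ^ (i + 1)) * ((k : F) + 1)
      = ((i : F) + 1) * PowerSeries.coeff k (lp F ^ i * gs F) := by
  have h1 : PowerSeries.coeff k (d⁄dX F (lp F ^ (i + 1)))
      = PowerSeries.coeff (k + 1) (lp F ^ (i + 1)) * ((k : F) + 1) := by
    rw [PowerSeries.coeff_derivative]
  rw [← h1, deriv_lp_pow, map_nsmul, nsmul_eq_mul]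
  push_cast
  try rfl
  try ring

lemma deriv_exs_one : d⁄dX F (exs (1 : F)) = exs (1 : F) * gs F := by
  ext k
  rw [PowerSeries.coeff_derivative]
  have hL : PowerSeries.coeff (k + 1) (exs (1 : F)) * ((k : F) + 1)
      = ∑ m ∈ Finset.range (k + 1),
          ((Nat.factorial m : F))⁻¹ * PowerSeries.coeff k (lp F ^ m * gs F) := by
    rw [coeff_exs, Finset.sum_mul, Finset.sum_range_succ']
    have h0 : ((1 : F) ^ 0 * ((Nat.factorial 0 : F))⁻¹)
        * PowerSeries.coeff (k + 1) (lp F ^ 0) * ((k : F) + 1) = 0 := by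
      rw [pow_zero (lp F), PowerSeries.coeff_one]
      simp
    rw [h0, add_zero]
    refine Finset.sum_congr rfl fun i _ => ?_
    rw [mul_assoc, coeff_d_lp_pow]
    have hi : ((i : F) + 1) ≠ 0 := Nat.cast_add_one_ne_zero i
    rw [one_pow, one_mul]
    rw [Nat.factorial_succ]
    push_cast
    rw [mul_inv]
    field_simp
  rw [hL, PowerSeries.coeff_mul]
  have step1 : ∀ ij ∈ Finset.HasAntidiagonal.antidiagonal k,
      PowerSeries.coeff ij.1 (exs (1 : F)) * PowerSeries.coeff ij.2 (gs F)
      = ∑ m ∈ Finset.range (k + 1),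
          ((Nat.factorial m : F))⁻¹
            * (PowerSeries.coeff ij.1 (lp F ^ m) * PowerSeries.coeff ij.2 (gs F)) := by
    intro ij hij
    have hm := Finset.HasAntidiagonal.mem_antidiagonal.mp hij
    rw [coeff_exs_ext (1 : F) (show ij.1 ≤ k by omega), Finset.sum_mul]
    refine Finset.sum_congr rfl fun m _ => ?_
    rw [one_pow]
    ring
  rw [Finset.sum_congr rfl step1, Finset.sum_comm]
  refine Finset.sum_congr rfl fun m _ => ?_
  rw [← Finset.mul_sum, ← PowerSeries.coeff_mul]

lemma exs_one : exs (1 : F) = 1 + PowerSeries.X := by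
  have he : ((1 + PowerSeries.X) * (d⁄dX F (exs (1 : F))) : PowerSeries F) = exs 1 := by
    rw [deriv_exs_one]
    calc ((1 + PowerSeries.X) * (exs 1 * gs F) : PowerSeries F)
        = exs 1 * ((1 + PowerSeries.X) * gs F) := by ring
      _ = exs 1 := by rw [one_add_X_mul_gs, mul_one]
  have hco : ∀ n, PowerSeries.coeff (n + 1) (exs (1 : F)) * ((n : F) + 1)
      + PowerSeries.coeff n (PowerSeries.X * d⁄dX F (exs (1 : F)))
      = PowerSeries.coeff n (exs (1 : F)) := by
    intro n
    have := congrArg (PowerSeries.coeff n) he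
    rwa [add_mul, one_mul, map_add, PowerSeries.coeff_derivative] at this
  have h1 : PowerSeries.coeff 1 (exs (1 : F)) = 1 := by
    have := hco 0
    rw [PowerSeries.coeff_zero_X_mul, coeff_exs_one_zero] at this
    simpa using this
  have h2 : ∀ j, PowerSeries.coeff (j + 2) (exs (1 : F)) = 0 := by
    intro j
    induction j with
    | zero =>
      have h := hco 1
      rw [PowerSeries.coeff_succ_X_mul, PowerSeries.coeff_derivative, h1] at h
      have h2' : PowerSeries.coeff 2 (exs (1 : F)) * 2 = 0 := by
        push_cast at h
        linear_combination h
      rcases mul_eq_zero.mp h2' with h' | h'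
      · simpa using h'
      · exact absurd h' two_ne_zero
    | succ j ih =>
      have h := hco (j + 2)
      rw [PowerSeries.coeff_succ_X_mul, PowerSeries.coeff_derivative, ih] at h
      have hz : PowerSeries.coeff (j + 3) (exs (1 : F)) * ((j : F) + 3) = 0 := by
        push_cast at h ⊢
        linear_combination h
      have hnz : ((j : F) + 3) ≠ 0 := by
        have h4 := Nat.cast_add_one_ne_zero (j + 2) (R := F)
        push_cast at h4
        intro hc
        apply h4
        linear_combination hc
      rcases mul_eq_zero.mp hz with h' | h'
      · simpa using h'
      · exact absurd h' hnz
  ext n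
  rw [map_add, PowerSeries.coeff_one, PowerSeries.coeff_X]
  match n with
  | 0 => simpa using coeff_exs_one_zero
  | 1 => simpa using h1
  | (j + 2) => simpa using h2 j

end PS


lemma interp {F L : Type*} [Field F] [CharZero F] [AddCommGroup L] [Module F L]
    (W : Submodule F L) (K : ℕ) (v : ℕ → L)
    (h : ∀ n : ℕ, n ≤ K → (∑ k ∈ Finset.range (K + 1), ((n : F)) ^ k • v k) ∈ W) :
    ∀ k, k ≤ K → v k ∈ W := by
  classical
  set c : Fin (K + 1) → F := fun i => ((i : ℕ) : F) with hcdef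
  have hc : Function.Injective c := by
    intro a b hab
    exact Fin.ext (Nat.cast_injective hab)
  set A : Matrix (Fin (K + 1)) (Fin (K + 1)) F := Matrix.vandermonde c with hA
  have hdet : A.det ≠ 0 := by
    rw [hA, Ne, Matrix.det_vandermonde_eq_zero_iff]
    rintro ⟨i, j, hij, hne⟩
    exact hne (hc hij)
  have hinv : A⁻¹ * A = 1 := Matrix.nonsing_inv_mul A (isUnit_iff_ne_zero.mpr hdet)
  intro k hk
  set kk : Fin (K + 1) := ⟨k, by omega⟩ with hkk
  have expand : v k = ∑ j : Fin (K + 1), (A⁻¹ kk j) • (∑ i : Fin (K + 1), A j i • v i.val) := by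
    have e1 : ∀ j, (A⁻¹ kk j) • (∑ i : Fin (K + 1), A j i • v i.val)
        = ∑ i : Fin (K + 1), (A⁻¹ kk j * A j i) • v i.val := by
      intro j
      rw [Finset.smul_sum]
      exact Finset.sum_congr rfl fun i _ => (smul_smul _ _ _)
    rw [Finset.sum_congr rfl fun j _ => e1 j, Finset.sum_comm]
    have e2 : ∀ i : Fin (K + 1), (∑ j : Fin (K + 1), (A⁻¹ kk j * A j i) • v i.val)
        = ((A⁻¹ * A) kk i) • v i.val := by
      intro i
      rw [Matrix.mul_apply, Finset.sum_smul]
    rw [Finset.sum_congr rfl fun i _ => e2 i, hinv]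
    rw [Finset.sum_eq_single kk]
    · simp [Matrix.one_apply]; rfl
    · intro b _ hb
      rw [Matrix.one_apply_ne (Ne.symm hb), zero_smul]
    · intro hh; exact absurd (Finset.mem_univ kk) hh
  rw [expand]
  refine Submodule.sum_mem _ fun j _ => Submodule.smul_mem _ _ ?_
  have : (∑ i : Fin (K + 1), A j i • v i.val)
      = ∑ i ∈ Finset.range (K + 1), ((j.val : F)) ^ i • v i := by
    rw [Finset.sum_range fun i => ((j.val : F)) ^ i • v i]
    exact Finset.sum_congr rfl fun i _ => by rw [hA, Matrix.vandermonde]; rfl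
  rw [this]
  exact h j.val (by omega)


end Stmt10

/-- A Lie superalgebra structure on an `F`-module `L` (decomposition into even and odd part,
bilinear bracket respecting parity, super-skew-symmetry and super-Jacobi identities). -/
structure LieSuperalgebraOn (F : Type*) (L : Type*) [CommRing F] [AddCommGroup L]
    [Module F L] where
  even : Submodule F L
  odd : Submodule F L
  compl : IsCompl even odd
  bracket : L →ₗ[F] L →ₗ[F] L
  bracket_ee : ∀ x ∈ even, ∀ y ∈ even, bracket x y ∈ even
  bracket_eo : ∀ x ∈ even, ∀ y ∈ odd, bracket x y ∈ odd
  bracket_oe : ∀ x ∈ odd, ∀ y ∈ even, bracket x y ∈ odd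
  bracket_oo : ∀ x ∈ odd, ∀ y ∈ odd, bracket x y ∈ even
  skew_even : ∀ x ∈ even, ∀ y : L, bracket x y = - bracket y x
  symm_odd : ∀ x ∈ odd, ∀ y ∈ odd, bracket x y = bracket y x
  jacobi_even : ∀ x ∈ even, ∀ y z : L,
    bracket x (bracket y z) = bracket (bracket x y) z + bracket y (bracket x z)
  jacobi_odd_even : ∀ x ∈ odd, ∀ y ∈ even, ∀ z : L,
    bracket x (bracket y z) = bracket (bracket x y) z + bracket y (bracket x z)
  jacobi_odd_odd : ∀ x ∈ odd, ∀ y ∈ odd, ∀ z : L,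
    bracket x (bracket y z) = bracket (bracket x y) z - bracket y (bracket x z)

/-- Let `L` be a linearly compact Lie superalgebra with a filtration
`L = S_{-d} ⊃ ⋯ ⊃ S₀ ⊃ S₁ ⊃ ⋯` by open subalgebras (here reindexed as `P j := S_{j-d}`, so
`P 0 = L`), with transitive associated graded algebra, Hausdorff (`⋂ P j = 0`) and complete in
the filtration topology.  If `σ` is a (continuous) automorphism of `L` preserving the
filtration and inducing the identity on `Gr L` (i.e. `σ₁ := σ - 1` maps `P j` into `P (j+1)`),
then `log σ = Σ_{m≥1} (-1)^{m+1} σ₁^m / m` converges in the linearly compact topology to an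
even derivation `D` with `D (P j) ⊆ P (j+1)` (i.e. `D` lies in the first member `(Der L)₁` of
the induced filtration of the derivation algebra), and `t ↦ exp (t • D)` converges to a
one-parameter group of automorphisms `E` with `E 1 = σ`; in particular `σ` lies in the image
of the exponential of `(Der L)₁`.  Convergence of a series is expressed by: each partial sum
up to `N` agrees with the limit modulo `P (j + N + 1)` on `P j`. -/
theorem stmt_10 (F : Type*) [Field F] [CharZero F]
    (L : Type*) [AddCommGroup L] [Module F L] (sb : LieSuperalgebraOn F L)
    (d : ℕ) (hd : 1 ≤ d) (P : ℕ → Submodule F L)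
    (hP0 : P 0 = ⊤) (hPanti : ∀ j, P (j + 1) ≤ P j)
    -- the filtration members are subalgebras: `[S_i, S_j] ⊆ S_{i+j}` (truncated at `-d`)
    (hPbr : ∀ i j : ℕ, ∀ x ∈ P i, ∀ y ∈ P j, sb.bracket x y ∈ P (i + j - d))
    -- Hausdorff-ness (the filtration topology is separated)
    (hsep : ⨅ j, P j = ⊥)
    -- completeness in the linearly compact (filtration) topology
    (hcompl : ∀ f : ℕ → L, (∀ m, f (m + 1) - f m ∈ P m) → ∃ x : L, ∀ m, x - f m ∈ P m)
    -- transitivity of the associated graded algebra `Gr L`: for `x ∈ 𝔤_n`, `n ≥ 0`,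
    -- `[x, 𝔤_{-1}] = 0` implies `x = 0`
    (htrans : ∀ m : ℕ, ∀ x ∈ P (m + d),
      (∀ y ∈ P (d - 1), sb.bracket x y ∈ P (m + d)) → x ∈ P (m + d + 1))
    -- `σ`: an automorphism of `L` preserving the filtration and inducing the identity on `Gr L`
    (σ : L ≃ₗ[F] L)
    (hσbr : ∀ x y : L, σ (sb.bracket x y) = sb.bracket (σ x) (σ y))
    (hσeven : Submodule.map (σ : L →ₗ[F] L) sb.even = sb.even)
    (hσodd : Submodule.map (σ : L →ₗ[F] L) sb.odd = sb.odd)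
    (hσfil : ∀ j, Submodule.map (σ : L →ₗ[F] L) (P j) = P j)
    (hσ1 : ∀ j, ∀ x ∈ P j, σ x - x ∈ P (j + 1)) :
    ∃ D : Module.End F L,
      -- `D = log σ` is the limit of the series `Σ_{m≥1} (-1)^{m+1} σ₁^m / m`
      (∀ j : ℕ, ∀ x ∈ P j, ∀ N : ℕ,
        D x - ∑ m ∈ Finset.Icc 1 N,
          ((-1 : F) ^ (m + 1) * (m : F)⁻¹) •
            (((σ : Module.End F L) - 1) ^ m) x ∈ P (j + N + 1)) ∧
      -- `D` is a derivation of the Lie superalgebra `L` ...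
      (∀ x y : L, D (sb.bracket x y) = sb.bracket (D x) y + sb.bracket x (D y)) ∧
      (∀ x ∈ sb.even, D x ∈ sb.even) ∧ (∀ x ∈ sb.odd, D x ∈ sb.odd) ∧
      -- ... lying in the first member `(Der L)₁` of the filtration of `Der L`
      (∀ j : ℕ, ∀ x ∈ P j, D x ∈ P (j + 1)) ∧
      -- and `t ↦ exp (t • D)` is a one-parameter group of automorphisms with `E 1 = σ`
      (∃ E : F → (L ≃ₗ[F] L),
        (∀ t : F, ∀ x y : L, E t (sb.bracket x y) = sb.bracket (E t x) (E t y)) ∧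
        (∀ t s : F, E (t + s) = (E t).trans (E s)) ∧
        E 0 = LinearEquiv.refl F L ∧ E 1 = σ ∧
        (∀ t : F, ∀ j : ℕ, ∀ x ∈ P j, ∀ N : ℕ,
          E t x - ∑ m ∈ Finset.range (N + 1),
            (t ^ m * ((Nat.factorial m : F)⁻¹)) • (D ^ m) x ∈ P (j + N + 1))) := by
  classical
  -- the filtration/limit context
  have hη' : ∀ j, ∀ x ∈ P j, ((σ : Module.End F L) - 1) x ∈ P (j + 1) := by
    intro j x hx
    have := hσ1 j x hx
    simpa [LinearMap.sub_apply] using this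
  set C : Stmt10.LimCtx F L :=
    ⟨P, (σ : Module.End F L) - 1, hP0, hPanti, hsep, hcompl, hη'⟩ with hCdef
  set D : Module.End F L := C.limEnd (Stmt10.lp F) with hDdef
  have hDx : ∀ x : L, D x = C.lim (Stmt10.lp F) x := fun x => rfl
  set br : L →ₗ[F] L →ₗ[F] L := sb.bracket with hbrdef
  -- partial sums vs the Icc sums in the statement
  have hIcc : ∀ (N : ℕ) (x : L), C.S (Stmt10.lp F) N x
      = ∑ m ∈ Finset.Icc 1 N, ((-1 : F) ^ (m + 1) * (m : F)⁻¹)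
          • ((((σ : Module.End F L) - 1)) ^ m) x := by
    intro N x
    rw [Stmt10.LimCtx.S]
    have hset : Finset.range (N + 1) = insert 0 (Finset.Icc 1 N) := by
      ext m
      simp only [Finset.mem_range, Finset.mem_Icc, Finset.mem_insert]
      omega
    rw [hset, Finset.sum_insert (by simp)]
    have h0 : (PowerSeries.coeff 0) (Stmt10.lp F) • ((C.η ^ 0) x) = 0 := by
      rw [Stmt10.coeff_lp_zero, zero_smul]
    rw [h0, zero_add]
    refine Finset.sum_congr rfl fun m hm => ?_
    rw [Stmt10.coeff_lp]
  -- clause 1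
  have clause1 : ∀ j : ℕ, ∀ x ∈ P j, ∀ N : ℕ,
      D x - ∑ m ∈ Finset.Icc 1 N,
        ((-1 : F) ^ (m + 1) * (m : F)⁻¹) • ((((σ : Module.End F L) - 1)) ^ m) x
        ∈ P (j + N + 1) := by
    intro j x hx N
    rw [hDx, ← hIcc]
    exact C.lim_spec (Stmt10.lp F) hx N
  -- clause 5 : D (P j) ⊆ P (j+1)
  have clause5 : ∀ j : ℕ, ∀ x ∈ P j, D x ∈ P (j + 1) := by
    intro j x hx
    have h := C.lim_spec (Stmt10.lp F) hx 0
    have hS0 : C.S (Stmt10.lp F) 0 x = 0 := by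
      rw [Stmt10.LimCtx.S]
      simp [Stmt10.coeff_lp_zero]
    rw [hS0, sub_zero] at h
    exact h
  -- parity
  have parity : ∀ (U V : Submodule F L), IsCompl U V →
      (∀ z ∈ U, σ z ∈ U) → (∀ z ∈ V, σ z ∈ V) →
      ∀ x ∈ U, C.lim (Stmt10.lp F) x ∈ U := by
    intro U V hUV hU hV x hx
    have hηU : ∀ z ∈ U, C.η z ∈ U := by
      intro z hz
      have : C.η z = σ z - z := by simp [hCdef, LinearMap.sub_apply]
      rw [this]
      exact Submodule.sub_mem _ (hU z hz) hz
    have hηV : ∀ z ∈ V, C.η z ∈ V := by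
      intro z hz
      have : C.η z = σ z - z := by simp [hCdef, LinearMap.sub_apply]
      rw [this]
      exact Submodule.sub_mem _ (hV z hz) hz
    have hηpowU : ∀ (k : ℕ), ∀ z ∈ U, (C.η ^ k) z ∈ U := by
      intro k
      induction k with
      | zero => intro z hz; simpa using hz
      | succ k ih =>
        intro z hz
        have : (C.η ^ (k + 1)) z = C.η ((C.η ^ k) z) := by
          rw [pow_succ']; exact Module.End.mul_apply _ _ _
        rw [this]
        exact hηU _ (ih z hz)
    have hηpowV : ∀ (k : ℕ), ∀ z ∈ V, (C.η ^ k) z ∈ V := by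
      intro k
      induction k with
      | zero => intro z hz; simpa using hz
      | succ k ih =>
        intro z hz
        have : (C.η ^ (k + 1)) z = C.η ((C.η ^ k) z) := by
          rw [pow_succ']; exact Module.End.mul_apply _ _ _
        rw [this]
        exact hηV _ (ih z hz)
    have hSU : ∀ (f : PowerSeries F) (N : ℕ), C.S f N x ∈ U := by
      intro f N
      exact Submodule.sum_mem _ fun m _ => Submodule.smul_mem _ _ (hηpowU m x hx)
    -- decompose the limit
    have hsup : C.lim (Stmt10.lp F) x ∈ U ⊔ V := by
      rw [hUV.sup_eq_top]; trivial
    obtain ⟨a, ha, b, hb, hab⟩ := Submodule.mem_sup.mp hsup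
    have hb0 : b = 0 := by
      have hbP : ∀ N : ℕ, b ∈ C.P N := by
        intro N
        cases N with
        | zero => exact C.mem_top b
        | succ N =>
          have htail := C.lim_tail (Stmt10.lp F) N x
          have hysup : C.lim (Stmt10.LimCtx.shiftPS F (N + 1) (Stmt10.lp F)) x ∈ U ⊔ V := by
            rw [hUV.sup_eq_top]; trivial
          obtain ⟨aN, haN, bN, hbN, habN⟩ := Submodule.mem_sup.mp hysup
          have h1 : (C.η ^ (N + 1)) aN ∈ U := hηpowU _ _ haN
          have h2 : (C.η ^ (N + 1)) bN ∈ V := hηpowV _ _ hbN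
          have h3 : (C.η ^ (N + 1)) bN ∈ C.P (N + 1) := by
            have := C.hηpow (C.mem_top bN) (N + 1)
            simpa using this
          have hsum : a + b = C.S (Stmt10.lp F) N x
              + ((C.η ^ (N + 1)) aN + (C.η ^ (N + 1)) bN) := by
            rw [hab, htail, ← habN, map_add]
          have heq : b - (C.η ^ (N + 1)) bN
              = (C.S (Stmt10.lp F) N x + (C.η ^ (N + 1)) aN) - a := by
            have e : b - (C.η ^ (N + 1)) bN
                - ((C.S (Stmt10.lp F) N x + (C.η ^ (N + 1)) aN) - a)
                = (a + b) - (C.S (Stmt10.lp F) N x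
                  + ((C.η ^ (N + 1)) aN + (C.η ^ (N + 1)) bN)) := by abel
            have : b - (C.η ^ (N + 1)) bN
                - ((C.S (Stmt10.lp F) N x + (C.η ^ (N + 1)) aN) - a) = 0 := by
              rw [e, hsum]; abel
            exact sub_eq_zero.mp this
          have hmemU : b - (C.η ^ (N + 1)) bN ∈ U := by
            rw [heq]
            exact Submodule.sub_mem _ (Submodule.add_mem _ (hSU _ N) h1) ha
          have hmemV : b - (C.η ^ (N + 1)) bN ∈ V :=
            Submodule.sub_mem _ hb h2
          have hzero : b - (C.η ^ (N + 1)) bN = 0 :=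
            Submodule.disjoint_def.mp hUV.disjoint _ hmemU hmemV
          have : b = (C.η ^ (N + 1)) bN := sub_eq_zero.mp hzero
          rw [this]
          exact h3
      have : b ∈ ⨅ j, P j := Submodule.mem_iInf _ |>.mpr hbP
      rw [hsep] at this
      exact (Submodule.mem_bot F).mp this
    rw [← hab, hb0, add_zero]
    exact ha
  have hσevenMem : ∀ z ∈ sb.even, σ z ∈ sb.even := by
    intro z hz
    rw [← hσeven]
    exact Submodule.mem_map_of_mem hz
  have hσoddMem : ∀ z ∈ sb.odd, σ z ∈ sb.odd := by
    intro z hz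
    rw [← hσodd]
    exact Submodule.mem_map_of_mem hz
  have clause3 : ∀ x ∈ sb.even, D x ∈ sb.even := fun x hx =>
    parity sb.even sb.odd sb.compl hσevenMem hσoddMem x hx
  have clause4 : ∀ x ∈ sb.odd, D x ∈ sb.odd := fun x hx =>
    parity sb.odd sb.even sb.compl.symm hσoddMem hσevenMem x hx
  -- exponential basics
  have hEmul : ∀ (t s : F) (x : L),
      C.lim (Stmt10.exs (t + s)) x = C.lim (Stmt10.exs t) (C.lim (Stmt10.exs s) x) := by
    intro t s x
    rw [← Stmt10.exs_mul, C.lim_mul]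
  have hE0 : ∀ x : L, C.lim (Stmt10.exs (0 : F)) x = x := by
    intro x
    rw [Stmt10.exs_zero, C.lim_one]
  have hE1 : ∀ x : L, C.lim (Stmt10.exs (1 : F)) x = σ x := by
    intro x
    rw [Stmt10.exs_one]
    refine (C.uniq fun N => ?_).symm
    cases N with
    | zero =>
      have hS : C.S (1 + PowerSeries.X : PowerSeries F) 0 x = x := by
        rw [Stmt10.LimCtx.S]
        simp
      rw [hS]
      exact hσ1 0 x (C.mem_top x)
    | succ N =>
      have hS : C.S (1 + PowerSeries.X : PowerSeries F) (N + 1) x = σ x := by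
        rw [Stmt10.LimCtx.S]
        have hsub : ({0, 1} : Finset ℕ) ⊆ Finset.range (N + 2) := by
          intro m hm
          simp only [Finset.mem_insert, Finset.mem_singleton] at hm
          simp only [Finset.mem_range]
          omega
        rw [← Finset.sum_subset hsub ?hz]
        case hz =>
          intro m hm hm'
          simp only [Finset.mem_insert, Finset.mem_singleton] at hm'
          have h2 : PowerSeries.coeff m (1 + PowerSeries.X : PowerSeries F) = 0 := by
            rw [map_add, PowerSeries.coeff_one, PowerSeries.coeff_X]
            simp only [show m ≠ 0 by tauto, show m ≠ 1 by tauto]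
            simp
          rw [h2, zero_smul]
        rw [show ({0, 1} : Finset ℕ) = insert 0 {1} from rfl,
          Finset.sum_insert (by simp), Finset.sum_singleton]
        have c0 : PowerSeries.coeff 0 (1 + PowerSeries.X : PowerSeries F) = 1 := by simp
        have c1 : PowerSeries.coeff 1 (1 + PowerSeries.X : PowerSeries F) = 1 := by simp
        rw [c0, c1, one_smul, one_smul]
        have : (C.η ^ 1) x = σ x - x := by
          simp [hCdef, LinearMap.sub_apply]
        rw [this]
        simp
      rw [hS, sub_self]
      exact Submodule.zero_mem _
  have hσpow_br : ∀ (k : ℕ) (x y : L),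
      (((σ : Module.End F L)) ^ k) (br x y)
        = br ((((σ : Module.End F L)) ^ k) x) ((((σ : Module.End F L)) ^ k) y) := by
    intro k
    induction k with
    | zero => intro x y; simp
    | succ k ih =>
      intro x y
      have h1 : ∀ z : L, (((σ : Module.End F L)) ^ (k + 1)) z
          = (((σ : Module.End F L)) ^ k) (σ z) := by
        intro z
        rw [pow_succ]
        rfl
      rw [h1, h1, h1]
      have h2 : σ (br x y) = br (σ x) (σ y) := hσbr x y
      rw [h2, ih]
  have hEnat : ∀ (k : ℕ) (x : L),
      C.lim (Stmt10.exs ((k : F))) x = (((σ : Module.End F L)) ^ k) x := by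
    intro k
    induction k with
    | zero =>
      intro x
      rw [Nat.cast_zero, hE0]
      simp
    | succ k ih =>
      intro x
      have hc : ((k + 1 : ℕ) : F) = (k : F) + 1 := by push_cast; ring
      rw [hc, hEmul (k : F) 1 x, hE1, ih]
      rw [pow_succ]
      rfl
  -- bracket membership helpers
  have hbrP1 : ∀ (i : ℕ), ∀ x ∈ P i, ∀ y : L, br x y ∈ P (i - d) := by
    intro i x hx y
    have := hPbr i 0 x hx y (by rw [hP0]; trivial)
    simpa using this
  have hbrP2 : ∀ (j : ℕ) (x : L), ∀ y ∈ P j, br x y ∈ P (j - d) := by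
    intro j x y hy
    have := hPbr 0 j x (by rw [hP0]; trivial) y hy
    simpa using this
  -- the core approximation argument
  have core : ∀ (x y : L) (n : ℕ),
      (∀ t : F, C.lim (Stmt10.exs t) (br x y)
          - br (C.lim (Stmt10.exs t) x) (C.lim (Stmt10.exs t) y) ∈ P n)
      ∧ D (br x y) - br (D x) y - br x (D y) ∈ P n := by
    intro x y n
    set N' : ℕ := n + d with hN'def
    have hNd : N' + 1 - d = n + 1 := by omega
    set u : ℕ → L → L := fun m z => ∑ k ∈ Finset.range (N' + 1),
      (((Nat.factorial m : F))⁻¹ * PowerSeries.coeff k (Stmt10.lp F ^ m)) • (C.η ^ k) z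
      with hudef
    have hu0 : ∀ z : L, u 0 z = z := by
      intro z
      rw [hudef]
      dsimp only
      rw [Finset.sum_eq_single 0]
      · simp
      · intro k _ hk
        rw [pow_zero, PowerSeries.coeff_one]
        simp [hk]
      · intro h; exact absurd (Finset.mem_range.mpr (Nat.succ_pos N')) h
    have hu1 : ∀ z : L, u 1 z = C.S (Stmt10.lp F) N' z := by
      intro z
      rw [hudef, Stmt10.LimCtx.S]
      dsimp only
      refine Finset.sum_congr rfl fun k _ => ?_
      simp [Nat.factorial]
    have huzero : ∀ m, N' < m → ∀ z : L, u m z = 0 := by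
      intro m hm z
      rw [hudef]
      dsimp only
      refine Finset.sum_eq_zero fun k hk => ?_
      have hkm : k < m := by
        have := Finset.mem_range.mp hk
        omega
      rw [Stmt10.coeff_lp_pow_vanish hkm, mul_zero, zero_smul]
    have huS : ∀ (t : F) (z : L), C.S (Stmt10.exs t) N' z
        = ∑ m ∈ Finset.range (N' + 1), t ^ m • u m z := by
      intro t z
      rw [Stmt10.LimCtx.S]
      have e1 : ∀ k ∈ Finset.range (N' + 1),
          PowerSeries.coeff k (Stmt10.exs t) • ((C.η ^ k) z)
          = ∑ m ∈ Finset.range (N' + 1),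
              ((t ^ m * ((Nat.factorial m : F))⁻¹) * PowerSeries.coeff k (Stmt10.lp F ^ m))
                • ((C.η ^ k) z) := by
        intro k hk
        rw [Stmt10.coeff_exs_ext t (Nat.lt_succ_iff.mp (Finset.mem_range.mp hk)),
          Finset.sum_smul]
      rw [Finset.sum_congr rfl e1, Finset.sum_comm]
      refine Finset.sum_congr rfl fun m _ => ?_
      rw [hudef]
      dsimp only
      rw [Finset.smul_sum]
      refine Finset.sum_congr rfl fun k _ => ?_
      rw [smul_smul, mul_assoc]
    have hEdiff : ∀ (t : F) (z : L),
        C.lim (Stmt10.exs t) z - ∑ m ∈ Finset.range (N' + 1), t ^ m • u m z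
          ∈ P (N' + 1) := by
      intro t z
      rw [← huS]
      exact C.lim_spec0 (Stmt10.exs t) z N'
    set w : ℕ → L := fun m => ∑ pq ∈ Finset.HasAntidiagonal.antidiagonal m, br (u pq.1 x) (u pq.2 y)
      with hwdef
    have hbrSS : ∀ t : F,
        br (∑ p ∈ Finset.range (N' + 1), t ^ p • u p x)
           (∑ q ∈ Finset.range (N' + 1), t ^ q • u q y)
        = ∑ m ∈ Finset.range (2 * N' + 1), t ^ m • w m := by
      intro t
      set cc : ℕ × ℕ → L := fun pq => t ^ (pq.1 + pq.2) • br (u pq.1 x) (u pq.2 y) with hccdef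
      have hcczero : ∀ pq : ℕ × ℕ, N' < pq.1 ∨ N' < pq.2 → cc pq = 0 := by
        rintro pq (h | h)
        · rw [hccdef]; dsimp only; rw [huzero _ h, map_zero, LinearMap.zero_apply, smul_zero]
        · rw [hccdef]; dsimp only; rw [huzero _ h, map_zero, smul_zero]
      have e0 : br (∑ p ∈ Finset.range (N' + 1), t ^ p • u p x)
           (∑ q ∈ Finset.range (N' + 1), t ^ q • u q y)
          = ∑ p ∈ Finset.range (N' + 1), ∑ q ∈ Finset.range (N' + 1), cc (p, q) := by
        rw [LinearMap.map_sum₂]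
        refine Finset.sum_congr rfl fun p _ => ?_
        rw [LinearMap.map_smul₂, map_sum, Finset.smul_sum]
        refine Finset.sum_congr rfl fun q _ => ?_
        rw [map_smul, smul_smul, ← pow_add]
      have e1 : ∑ p ∈ Finset.range (N' + 1), ∑ q ∈ Finset.range (N' + 1), cc (p, q)
          = ∑ pq ∈ Finset.range (N' + 1) ×ˢ Finset.range (N' + 1), cc pq :=
        (Finset.sum_product _ _ _).symm
      have e2 : ∑ pq ∈ Finset.range (N' + 1) ×ˢ Finset.range (N' + 1), cc pq
          = ∑ pq ∈ Finset.range (2 * N' + 1) ×ˢ Finset.range (2 * N' + 1), cc pq := by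
        refine Finset.sum_subset ?_ fun pq hpq hpq' => ?_
        · intro pq hpq
          simp only [Finset.mem_product, Finset.mem_range] at *
          omega
        · simp only [Finset.mem_product, Finset.mem_range] at hpq hpq'
          exact hcczero pq (by omega)
      have e3 : ∑ m ∈ Finset.range (2 * N' + 1), t ^ m • w m
          = ∑ m ∈ Finset.range (2 * N' + 1), ∑ pq ∈ Finset.HasAntidiagonal.antidiagonal m, cc pq := by
        refine Finset.sum_congr rfl fun m _ => ?_
        rw [hwdef]
        dsimp only
        rw [Finset.smul_sum]
        refine Finset.sum_congr rfl fun pq hpq => ?_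
        rw [hccdef]
        dsimp only
        rw [Finset.HasAntidiagonal.mem_antidiagonal.mp hpq]
      have e4 := Stmt10.sum_range_antidiagonal (2 * N') cc
      have e5 : ∑ pq ∈ (Finset.range (2 * N' + 1) ×ˢ Finset.range (2 * N' + 1)).filter
            (fun pq => pq.1 + pq.2 ≤ 2 * N'), cc pq
          = ∑ pq ∈ Finset.range (2 * N' + 1) ×ˢ Finset.range (2 * N' + 1), cc pq := by
        refine Finset.sum_subset (Finset.filter_subset _ _) fun pq hpq hpq' => ?_
        simp only [Finset.mem_product, Finset.mem_range] at hpq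
        simp only [Finset.mem_filter, Finset.mem_product, Finset.mem_range] at hpq'
        refine hcczero pq ?_
        omega
      rw [e0, e1, e2, e3, e4, e5]
    have hbrE : ∀ t : F,
        br (C.lim (Stmt10.exs t) x) (C.lim (Stmt10.exs t) y)
          - ∑ m ∈ Finset.range (2 * N' + 1), t ^ m • w m ∈ P (n + 1) := by
      intro t
      rw [← hbrSS t]
      have hax := hEdiff t x
      have hby := hEdiff t y
      have e : br (C.lim (Stmt10.exs t) x) (C.lim (Stmt10.exs t) y)
          - br (∑ p ∈ Finset.range (N' + 1), t ^ p • u p x)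
              (∑ q ∈ Finset.range (N' + 1), t ^ q • u q y)
          = br (C.lim (Stmt10.exs t) x - ∑ p ∈ Finset.range (N' + 1), t ^ p • u p x)
              (C.lim (Stmt10.exs t) y)
            + br (∑ p ∈ Finset.range (N' + 1), t ^ p • u p x)
              (C.lim (Stmt10.exs t) y - ∑ q ∈ Finset.range (N' + 1), t ^ q • u q y) := by
        rw [map_sub, LinearMap.sub_apply, map_sub]
        abel
      rw [e]
      have m1 : br (C.lim (Stmt10.exs t) x - ∑ p ∈ Finset.range (N' + 1), t ^ p • u p x)
          (C.lim (Stmt10.exs t) y) ∈ P (n + 1) := by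
        have := hbrP1 (N' + 1) _ hax (C.lim (Stmt10.exs t) y)
        rwa [hNd] at this
      have m2 : br (∑ p ∈ Finset.range (N' + 1), t ^ p • u p x)
          (C.lim (Stmt10.exs t) y - ∑ q ∈ Finset.range (N' + 1), t ^ q • u q y)
          ∈ P (n + 1) := by
        have := hbrP2 (N' + 1) (∑ p ∈ Finset.range (N' + 1), t ^ p • u p x) _ hby
        rwa [hNd] at this
      exact Submodule.add_mem _ m1 m2
    have hbrL : ∀ t : F,
        C.lim (Stmt10.exs t) (br x y)
          - ∑ m ∈ Finset.range (2 * N' + 1), t ^ m • u m (br x y) ∈ P (N' + 1) := by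
      intro t
      have h := hEdiff t (br x y)
      have e : ∑ m ∈ Finset.range (N' + 1), t ^ m • u m (br x y)
          = ∑ m ∈ Finset.range (2 * N' + 1), t ^ m • u m (br x y) := by
        refine Finset.sum_subset ?_ fun m hm hm' => ?_
        · intro m hm
          simp only [Finset.mem_range] at *
          omega
        · simp only [Finset.mem_range] at hm hm'
          rw [huzero m (by omega), smul_zero]
      rwa [e] at h
    set vv : ℕ → L := fun m => u m (br x y) - w m with hvvdef
    have hpoly : ∀ t : F,
        (C.lim (Stmt10.exs t) (br x y)
          - br (C.lim (Stmt10.exs t) x) (C.lim (Stmt10.exs t) y))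
          - ∑ m ∈ Finset.range (2 * N' + 1), t ^ m • vv m ∈ P (n + 1) := by
      intro t
      have h1 : C.lim (Stmt10.exs t) (br x y)
          - ∑ m ∈ Finset.range (2 * N' + 1), t ^ m • u m (br x y) ∈ P (n + 1) :=
        C.hPle (by omega) (hbrL t)
      have h2 := hbrE t
      have e : ∑ m ∈ Finset.range (2 * N' + 1), t ^ m • vv m
          = ∑ m ∈ Finset.range (2 * N' + 1), t ^ m • u m (br x y)
            - ∑ m ∈ Finset.range (2 * N' + 1), t ^ m • w m := by
        rw [← Finset.sum_sub_distrib]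
        refine Finset.sum_congr rfl fun m _ => ?_
        rw [hvvdef]
        dsimp only
        rw [smul_sub]
      rw [e]
      have e2 : (C.lim (Stmt10.exs t) (br x y)
          - br (C.lim (Stmt10.exs t) x) (C.lim (Stmt10.exs t) y))
          - (∑ m ∈ Finset.range (2 * N' + 1), t ^ m • u m (br x y)
            - ∑ m ∈ Finset.range (2 * N' + 1), t ^ m • w m)
          = (C.lim (Stmt10.exs t) (br x y)
              - ∑ m ∈ Finset.range (2 * N' + 1), t ^ m • u m (br x y))
            - (br (C.lim (Stmt10.exs t) x) (C.lim (Stmt10.exs t) y)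
              - ∑ m ∈ Finset.range (2 * N' + 1), t ^ m • w m) := by
        abel
      rw [e2]
      exact Submodule.sub_mem _ h1 h2
    have hvals : ∀ ℓ : ℕ, ℓ ≤ 2 * N' →
        ∑ m ∈ Finset.range (2 * N' + 1), ((ℓ : F)) ^ m • vv m ∈ P (n + 1) := by
      intro ℓ _
      have h := hpoly ((ℓ : F))
      have hdef0 : C.lim (Stmt10.exs ((ℓ : F))) (br x y)
          - br (C.lim (Stmt10.exs ((ℓ : F))) x) (C.lim (Stmt10.exs ((ℓ : F))) y) = 0 := by
        rw [hEnat, hEnat, hEnat, hσpow_br]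
        exact sub_self _
      rw [hdef0, zero_sub] at h
      rwa [neg_mem_iff] at h
    have hvv : ∀ m, m ≤ 2 * N' → vv m ∈ P (n + 1) :=
      Stmt10.interp (P (n + 1)) (2 * N') vv hvals
    constructor
    · intro t
      have hSig : ∑ m ∈ Finset.range (2 * N' + 1), t ^ m • vv m ∈ P (n + 1) := by
        refine Submodule.sum_mem _ fun m hm => Submodule.smul_mem _ _ ?_
        exact hvv m (by
          have := Finset.mem_range.mp hm
          omega)
      have h := hpoly t
      have := Submodule.add_mem _ h hSig
      rw [sub_add_cancel] at this
      exact hPanti n this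
    · have h1 : vv 1 ∈ P (n + 1) := hvv 1 (by omega)
      have hanti1 : Finset.HasAntidiagonal.antidiagonal (1 : ℕ) = {(0, 1), (1, 0)} := rfl
      have hw1 : w 1 = br x (u 1 y) + br (u 1 x) y := by
        rw [hwdef]
        dsimp only
        rw [hanti1, Finset.sum_insert (by decide), Finset.sum_singleton]
        rw [hu0, hu0]
      have hvv1 : vv 1 = u 1 (br x y) - br x (u 1 y) - br (u 1 x) y := by
        rw [hvvdef]
        dsimp only
        rw [hw1]
        abel
      have hDS : ∀ z : L, D z - u 1 z ∈ P (N' + 1) := by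
        intro z
        rw [hu1, hDx]
        exact C.lim_spec0 _ z N'
      have c1 : br (D x - u 1 x) y ∈ P (n + 1) := by
        have := hbrP1 (N' + 1) _ (hDS x) y
        rwa [hNd] at this
      have c2 : br x (D y - u 1 y) ∈ P (n + 1) := by
        have := hbrP2 (N' + 1) x _ (hDS y)
        rwa [hNd] at this
      have c3 : D (br x y) - u 1 (br x y) ∈ P (n + 1) :=
        C.hPle (by omega) (hDS (br x y))
      have e1 : br (D x - u 1 x) y = br (D x) y - br (u 1 x) y := by
        rw [map_sub, LinearMap.sub_apply]
      have e2 : br x (D y - u 1 y) = br x (D y) - br x (u 1 y) := map_sub _ _ _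
      have e : D (br x y) - br (D x) y - br x (D y)
          = vv 1 + (D (br x y) - u 1 (br x y))
            - br (D x - u 1 x) y - br x (D y - u 1 y) := by
        rw [hvv1, e1, e2]
        abel
      rw [e]
      have := Submodule.sub_mem _ (Submodule.sub_mem _
        (Submodule.add_mem _ h1 c3) c1) c2
      exact hPanti n this
  -- conclusions from core, via Hausdorff
  have hEbr : ∀ (t : F) (x y : L),
      C.lim (Stmt10.exs t) (br x y)
        = br (C.lim (Stmt10.exs t) x) (C.lim (Stmt10.exs t) y) := by
    intro t x y
    have hmem : ∀ n, C.lim (Stmt10.exs t) (br x y)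
        - br (C.lim (Stmt10.exs t) x) (C.lim (Stmt10.exs t) y) ∈ P n :=
      fun n => (core x y n).1 t
    have : C.lim (Stmt10.exs t) (br x y)
        - br (C.lim (Stmt10.exs t) x) (C.lim (Stmt10.exs t) y) ∈ ⨅ j, P j :=
      Submodule.mem_iInf _ |>.mpr hmem
    rw [hsep] at this
    exact sub_eq_zero.mp ((Submodule.mem_bot F).mp this)
  have clause2 : ∀ x y : L, D (br x y) = br (D x) y + br x (D y) := by
    intro x y
    have hmem : ∀ n, D (br x y) - br (D x) y - br x (D y) ∈ P n :=
      fun n => (core x y n).2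
    have : D (br x y) - br (D x) y - br x (D y) ∈ ⨅ j, P j :=
      Submodule.mem_iInf _ |>.mpr hmem
    rw [hsep] at this
    have h0 := (Submodule.mem_bot F).mp this
    have : D (br x y) - (br (D x) y + br x (D y)) = 0 := by
      rw [← h0]; abel
    exact sub_eq_zero.mp this
  refine ⟨D, clause1, clause2, clause3, clause4, clause5, ?_⟩
  -- the one-parameter group
  have hinv : ∀ t : F,
      (C.limEnd (Stmt10.exs t)) ∘ₗ (C.limEnd (Stmt10.exs (-t))) = LinearMap.id := by
    intro t
    apply LinearMap.ext
    intro z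
    have h : C.lim (Stmt10.exs t) (C.lim (Stmt10.exs (-t)) z) = z := by
      rw [← hEmul]
      rw [show t + (-t) = (0 : F) by ring, hE0]
    simpa using h
  set E : F → (L ≃ₗ[F] L) := fun t =>
    LinearEquiv.ofLinear (C.limEnd (Stmt10.exs t)) (C.limEnd (Stmt10.exs (-t)))
      (hinv t) (by
        have h := hinv (-t)
        rwa [neg_neg] at h) with hEdef
  have hEapp : ∀ (t : F) (z : L), E t z = C.lim (Stmt10.exs t) z := fun t z => rfl
  refine ⟨E, ?_, ?_, ?_, ?_, ?_⟩
  · intro t x y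
    rw [hEapp, hEapp, hEapp]
    exact hEbr t x y
  · intro t s
    apply LinearEquiv.ext
    intro z
    have h : ((E t).trans (E s)) z = E s (E t z) := rfl
    rw [h, hEapp, hEapp, hEapp]
    rw [show t + s = s + t by ring, hEmul s t z]
  · apply LinearEquiv.ext
    intro z
    rw [hEapp]
    simpa using hE0 z
  · apply LinearEquiv.ext
    intro z
    rw [hEapp]
    simpa using hE1 z
  · intro t j x hx N
    have hDpow : ∀ (m : ℕ) (z : L), (D ^ m) z = C.lim ((Stmt10.lp F) ^ m) z := by
      intro m
      induction m with
      | zero =>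
        intro z
        rw [pow_zero, pow_zero, C.lim_one]
        simp
      | succ m ih =>
        intro z
        have h1 : (D ^ (m + 1)) z = D ((D ^ m) z) := by
          rw [pow_succ']
          rfl
        rw [h1, ih, hDx, ← C.lim_mul, ← pow_succ']
    have hsum : ∑ m ∈ Finset.range (N + 1),
        (t ^ m * ((Nat.factorial m : F)⁻¹)) • (D ^ m) x
        = C.lim (∑ m ∈ Finset.range (N + 1),
            (t ^ m * ((Nat.factorial m : F)⁻¹)) • ((Stmt10.lp F) ^ m)) x := by
      rw [C.lim_fsum]
      refine Finset.sum_congr rfl fun m _ => ?_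
      rw [C.lim_fsmul, hDpow]
    rw [hEapp, hsum]
    have hsub : C.lim (Stmt10.exs t) x
        - C.lim (∑ m ∈ Finset.range (N + 1),
            (t ^ m * ((Nat.factorial m : F)⁻¹)) • ((Stmt10.lp F) ^ m)) x
        = C.lim (Stmt10.exs t - ∑ m ∈ Finset.range (N + 1),
            (t ^ m * ((Nat.factorial m : F)⁻¹)) • ((Stmt10.lp F) ^ m)) x := by
      have e : Stmt10.exs t = (Stmt10.exs t - ∑ m ∈ Finset.range (N + 1),
            (t ^ m * ((Nat.factorial m : F)⁻¹)) • ((Stmt10.lp F) ^ m))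
          + ∑ m ∈ Finset.range (N + 1),
            (t ^ m * ((Nat.factorial m : F)⁻¹)) • ((Stmt10.lp F) ^ m) := by
        ring
      conv_lhs => rw [e]
      rw [C.lim_fadd]
      abel
    rw [hsub]
    have hco : ∀ k ≤ N, PowerSeries.coeff k
        (Stmt10.exs t - ∑ m ∈ Finset.range (N + 1),
          (t ^ m * ((Nat.factorial m : F)⁻¹)) • ((Stmt10.lp F) ^ m)) = 0 := by
      intro k hk
      rw [map_sub, map_sum]
      have e1 : ∀ m ∈ Finset.range (N + 1),
          PowerSeries.coeff k ((t ^ m * ((Nat.factorial m : F)⁻¹)) • ((Stmt10.lp F) ^ m))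
          = (t ^ m * ((Nat.factorial m : F))⁻¹) * PowerSeries.coeff k ((Stmt10.lp F) ^ m) := by
        intro m _
        rw [map_smul, smul_eq_mul]
      rw [Finset.sum_congr rfl e1, Stmt10.coeff_exs_ext t hk, sub_self]
    exact C.lim_lowvanish hco hx
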